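/- For all natural numbers n, β ≥ 1, and γ ≥ 1 with α = γ, the identity ∑_{i=0}^n (-1)^{n-i} * C((β-1)*i + γ, n-i) * (γ/(β*i+γ)) * C(β*i+γ, i) = δ_{0,n} holds, where δ_{0,n} is the Kronecker delta. -/

import Mathlib

noncomputable def B (z : ℤ) (n : ℕ) : ℚ :=
  (∏ j ∈ Finset.range n, ((z : ℚ) - j)) / n.factorial

lemma B_zero (z : ℤ) : B z 0 = 1 := by simp [B]

lemma B_pascal (z : ℤ) (m : ℕ) :
    B z (m + 1) = B (z - 1) (m + 1) + B (z - 1) m := by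
  have h1 : ∏ j ∈ Finset.range (m + 1), ((z : ℚ) - j)
      = (z : ℚ) * ∏ j ∈ Finset.range m, (((z - 1 : ℤ) : ℚ) - j) := by
    rw [Finset.prod_range_succ']
    have hc : ∀ j ∈ Finset.range m, ((z : ℚ) - ((j : ℕ) + 1 : ℕ)) = (((z - 1 : ℤ) : ℚ) - j) := by
      intro j _; push_cast; ring
    rw [Finset.prod_congr rfl hc]
    push_cast; ring
  have h2 : ∏ j ∈ Finset.range (m + 1), (((z - 1 : ℤ) : ℚ) - j)
      = (∏ j ∈ Finset.range m, (((z - 1 : ℤ) : ℚ) - j)) * ((z : ℚ) - 1 - m) := by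
    rw [Finset.prod_range_succ]; push_cast; ring_nf
  simp only [B, h1, h2]
  have hm : (((m + 1 : ℕ)).factorial : ℚ) = (m + 1) * m.factorial := by
    push_cast [Nat.factorial_succ]; ring
  rw [hm]
  have hf : (m.factorial : ℚ) ≠ 0 := by positivity
  field_simp
  ring

lemma prod_nat (a : ℕ) : ∀ n : ℕ,
    ∏ j ∈ Finset.range n, ((a : ℚ) - j) = a.choose n * n.factorial := by
  intro n
  induction n with
  | zero => simp
  | succ m ih =>
    rw [Finset.prod_range_succ, ih]
    have key : (a.choose (m+1) : ℚ) * (m+1) = a.choose m * ((a : ℚ) - m) := by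
      rcases le_or_gt m a with h | h
      · have h2 := Nat.choose_succ_right_eq a m
        have hc : ((a.choose (m+1) : ℚ)) * ((m+1 : ℕ) : ℚ) = (a.choose m : ℚ) * ((a - m : ℕ) : ℚ) := by
          exact_mod_cast congrArg (Nat.cast : ℕ → ℚ) h2
        rw [Nat.cast_sub h] at hc
        push_cast at hc ⊢
        linarith [hc]
      · rw [Nat.choose_eq_zero_of_lt h, Nat.choose_eq_zero_of_lt (by omega)]
        simp
    have hm : (((m + 1 : ℕ)).factorial : ℚ) = (m + 1) * m.factorial := by
      push_cast [Nat.factorial_succ]; ring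
    rw [hm]
    nlinarith [key]

lemma B_nat (a n : ℕ) : B (a : ℤ) n = a.choose n := by
  have h := prod_nat a n
  simp only [B]
  have hc : ∏ j ∈ Finset.range n, (((a : ℤ) : ℚ) - j) = ∏ j ∈ Finset.range n, ((a : ℚ) - j) := by
    push_cast; rfl
  rw [hc, h]
  have hf : (n.factorial : ℚ) ≠ 0 := by positivity
  field_simp

lemma B_zero_arg (n : ℕ) : B 0 n = if n = 0 then 1 else 0 := by
  cases n with
  | zero => simp [B]
  | succ m =>
    simp only [B]
    rw [Finset.prod_eq_zero (Finset.mem_range.2 (Nat.succ_pos m))]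
    · simp
    · simp


noncomputable def fC (β c i : ℕ) : ℚ :=
  (c : ℚ) / (β * i + c) * ((β * i + c).choose i)

lemma fC_zero (β c : ℕ) (hc : 1 ≤ c) : fC β c 0 = 1 := by
  have : (c : ℚ) ≠ 0 := by positivity
  simp [fC, this]

-- f_{i+1}(1) = f_i(β)
lemma fC_root (β : ℕ) (hβ : 1 ≤ β) (i : ℕ) : fC β 1 (i + 1) = fC β β i := by
  simp only [fC, show β * (i + 1) + 1 = (β * i + β) + 1 from by ring]
  generalize hG : β * i + β = N
  have hNq : (N : ℚ) = β * ((i : ℚ) + 1) := by rw [← hG]; push_cast; ring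
  have hkey : (N + 1) * N.choose i = (N + 1).choose (i + 1) * (i + 1) :=
    Nat.add_one_mul_choose_eq N i
  have hkq : ((N : ℚ) + 1) * (N.choose i) = ((N + 1).choose (i + 1) : ℚ) * ((i : ℚ) + 1) := by
    exact_mod_cast congrArg (Nat.cast : ℕ → ℚ) hkey
  have hNpos : (0 : ℚ) < N := by
    rw [hNq]
    have h1 : (1 : ℚ) ≤ β := by exact_mod_cast hβ
    positivity
  have h1 : ((N : ℚ) + 1) ≠ 0 := by positivity
  have h3 : (N : ℚ) ≠ 0 := ne_of_gt hNpos
  push_cast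
  rw [show ((β : ℚ) * (i + 1) + 1) = (N : ℚ) + 1 from by linear_combination -hNq,
      show ((β : ℚ) * i + β) = (N : ℚ) from by linear_combination -hNq]
  field_simp
  linear_combination (-(β : ℚ)) * hkq + (((N + 1).choose (i + 1) : ℚ)) * hNq

-- f_{i+1}(c+1) = f_{i+1}(c) + f_i(c+β)
lemma fC_rec (β c : ℕ) (hβ : 1 ≤ β) (i : ℕ) :
    fC β (c + 1) (i + 1) = fC β c (i + 1) + fC β (c + β) i := by
  simp only [fC, show β * (i + 1) + (c + 1) = (β * i + β + c) + 1 from by ring,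
    show β * (i + 1) + c = β * i + β + c from by ring,
    show β * i + (c + β) = β * i + β + c from by ring]
  generalize hG : β * i + β + c = N
  have hNq : (N : ℚ) = β * i + β + c := by rw [← hG]; push_cast; ring
  have hiN : i ≤ N := by nlinarith [hG, Nat.one_mul i]
  have hp : (N + 1).choose (i + 1) = N.choose i + N.choose (i + 1) := Nat.choose_succ_succ N i
  have hpq : ((N + 1).choose (i + 1) : ℚ) = N.choose i + N.choose (i + 1) := by
    exact_mod_cast congrArg (Nat.cast : ℕ → ℚ) hp
  have hk : N.choose (i + 1) * (i + 1) = N.choose i * (N - i) := Nat.choose_succ_right_eq N i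
  have hkq : (N.choose (i + 1) : ℚ) * ((i : ℚ) + 1) = (N.choose i : ℚ) * ((N : ℚ) - i) := by
    have := congrArg (Nat.cast : ℕ → ℚ) hk
    push_cast [Nat.cast_sub hiN] at this
    convert this using 2 <;> push_cast <;> ring
  have hb1 : (1 : ℚ) ≤ β := by exact_mod_cast hβ
  have hNpos : (0 : ℚ) < N := by rw [hNq]; positivity
  have h1 : ((N : ℚ) + 1) ≠ 0 := by positivity
  have h3 : (N : ℚ) ≠ 0 := ne_of_gt hNpos
  push_cast
  rw [show ((β : ℚ) * (i + 1) + (c + 1)) = (N : ℚ) + 1 from by linear_combination -hNq,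
      show ((β : ℚ) * (i + 1) + c) = (N : ℚ) from by linear_combination -hNq,
      show ((β : ℚ) * i + (c + β)) = (N : ℚ) from by linear_combination -hNq]
  field_simp
  linear_combination ((c : ℚ) + 1) * (N : ℚ) * hpq + (β : ℚ) * hkq + ((N.choose (i+1) : ℚ) + (N.choose i : ℚ)) * hNq

noncomputable def S (β a c n : ℕ) : ℚ :=
  ∑ i ∈ Finset.range (n + 1),
    (-1 : ℚ) ^ (n - i) * (((β - 1) * i + a).choose (n - i) : ℚ) * fC β c i

lemma key (β : ℕ) (hβ : 1 ≤ β) :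
    ∀ n a c : ℕ, 1 ≤ a → 1 ≤ c → S β a c n = (-1) ^ n * B ((a : ℤ) - c) n := by
  intro n
  induction n using Nat.strong_induction_on with
  | _ n ih =>
    match n with
    | 0 =>
      intro a c ha hc
      simp [S, fC_zero β c hc, B_zero]
    | (m + 1) =>
      intro a c ha hc
      induction c, hc using Nat.le_induction with
      | base =>
        have anchor : S β a 1 (m + 1)
            = S β (a + β - 1) β m + (-1) ^ (m + 1) * (a.choose (m + 1) : ℚ) := by
          unfold S
          rw [Finset.sum_range_succ']
          congr 1
          · apply Finset.sum_congr rfl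
            intro i _
            rw [fC_root β hβ i]
            have e1 : m + 1 - (i + 1) = m - i := by omega
            have e2 : (β - 1) * (i + 1) + a = (β - 1) * i + (a + β - 1) := by
              rw [Nat.mul_succ]; have : 1 ≤ β := hβ; omega
            rw [e1, e2]
          · rw [fC_zero β 1 le_rfl]
            norm_num
        rw [anchor, ih m (by omega) (a + β - 1) β (by omega) hβ]
        have hcast : ((a + β - 1 : ℕ) : ℤ) - (β : ℤ) = (a : ℤ) - 1 := by omega
        rw [hcast]
        have hp := B_pascal (a : ℤ) m
        have hn := B_nat a (m + 1)
        have hone : ((1 : ℕ) : ℤ) = 1 := by norm_num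
        rw [hone]
        rw [← hn] at *
        rw [pow_succ]
        linear_combination ((-1 : ℚ) ^ m * (-1)) * hp
      | succ c hc ih2 =>
        have split : ∀ i : ℕ,
            (-1 : ℚ) ^ (m + 1 - (i + 1)) * (((β - 1) * (i + 1) + a).choose (m + 1 - (i + 1)) : ℚ)
              * fC β (c + 1) (i + 1)
            = (-1 : ℚ) ^ (m + 1 - (i + 1)) * (((β - 1) * (i + 1) + a).choose (m + 1 - (i + 1)) : ℚ)
                * fC β c (i + 1)
              + (-1 : ℚ) ^ (m - i) * (((β - 1) * i + (a + β - 1)).choose (m - i) : ℚ)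
                * fC β (c + β) i := by
          intro i
          rw [fC_rec β c hβ i, mul_add]
          congr 2
          · have e1 : m + 1 - (i + 1) = m - i := by omega
            have e2 : (β - 1) * (i + 1) + a = (β - 1) * i + (a + β - 1) := by
              rw [Nat.mul_succ]; have : 1 ≤ β := hβ; omega
            rw [e1, e2]
        have step : S β a (c + 1) (m + 1) = S β a c (m + 1) + S β (a + β - 1) (c + β) m := by
          unfold S
          rw [Finset.sum_range_succ' (fun i => (-1 : ℚ) ^ (m + 1 - i) * (((β - 1) * i + a).choose (m + 1 - i) : ℚ) * fC β (c + 1) i)]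
          rw [Finset.sum_congr rfl (fun i _ => split i), Finset.sum_add_distrib]
          rw [Finset.sum_range_succ' (fun i => (-1 : ℚ) ^ (m + 1 - i) * (((β - 1) * i + a).choose (m + 1 - i) : ℚ) * fC β c i)]
          rw [fC_zero β (c + 1) (by omega), fC_zero β c (by omega)]
          ring
        rw [step, ih2, ih m (by omega) (a + β - 1) (c + β) (by omega) (by omega)]
        have hc1 : ((a + β - 1 : ℕ) : ℤ) - ((c + β : ℕ) : ℤ) = (a : ℤ) - c - 1 := by
          push_cast; omega
        have hc2 : (a : ℤ) - ((c + 1 : ℕ) : ℤ) = ((a : ℤ) - c) - 1 := by push_cast; ring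
        rw [hc1, hc2]
        have hp := B_pascal ((a : ℤ) - c) m
        rw [show (a : ℤ) - c - 1 = ((a : ℤ) - c) - 1 from by ring] at *
        rw [pow_succ]
        linear_combination ((-1 : ℚ) ^ m * (-1)) * hp


theorem stmt_1 (n β γ : ℕ) (hβ : 1 ≤ β) (hγ : 1 ≤ γ) :
    ∑ i ∈ Finset.range (n + 1),
      (-1 : ℚ) ^ (n - i) * (((β - 1) * i + γ).choose (n - i)) *
        ((γ : ℚ) / (β * i + γ)) * ((β * i + γ).choose i)
      = if n = 0 then 1 else 0 := by
  have h := key β hβ n γ γ hγ hγ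
  have hs : S β γ γ n
      = ∑ i ∈ Finset.range (n + 1),
        (-1 : ℚ) ^ (n - i) * (((β - 1) * i + γ).choose (n - i)) *
          ((γ : ℚ) / (β * i + γ)) * ((β * i + γ).choose i) := by
    unfold S fC
    apply Finset.sum_congr rfl
    intro i _
    ring
  rw [← hs, h, sub_self, B_zero_arg]
  cases n with
  | zero => norm_num
  | succ m => simp
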